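/- Let c : Fin k → ℕ be an input assignment with total population n = Σ_i c(i) ≥ 1, and let M be a multiset over Fin k × Fin k such that, for every color i, the number of elements of M with bra equal to i and the number of elements of M with ket equal to i both equal c(i). If M is stable — i.e., no weight-decreasing ket-exchange step applies to any two of its elements — then M equals the multiset union of the circle bra-ket sets f(G_1), f(G_2), …, f(G_q) of the greedy independent sets of c. -/

import Mathlib

/-- The weight of a bra-ket `(i, j)`: `k` if `i = j`, and `(j - i) mod k` otherwise. -/
def wt (k : ℕ) (i j : Fin k) : ℕ :=
  if i = j then k else (((j : ℤ) - (i : ℤ)) % (k : ℤ)).toNat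

/-- A weight-decreasing ket-exchange step: two elements `(i, j)` and `(i', j')`
(counted with multiplicity) are replaced by `(i, j')` and `(i', j)`, under the
condition `min(w(i, j'), w(i', j)) < min(w(i, j), w(i', j'))`. -/
def DecStep (k : ℕ) (C C' : Multiset (Fin k × Fin k)) : Prop :=
  ∃ (i j i' j' : Fin k) (D : Multiset (Fin k × Fin k)),
    C = (i, j) ::ₘ (i', j') ::ₘ D ∧ C' = (i, j') ::ₘ (i', j) ::ₘ D ∧
    min (wt k i j') (wt k i' j) < min (wt k i j) (wt k i' j')

/-- The greedy independent set `G_p`: the set of colors whose count is at least `p`. -/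
def greedySet {k : ℕ} (c : Fin k → ℕ) (p : ℕ) : Finset (Fin k) :=
  Finset.univ.filter (fun i => p ≤ c i)

/-- The circle bra-ket multiset of a finite set `G` of colors: with
`g_0 < g_1 < ⋯ < g_m` the elements of `G` in increasing order, it consists of the
pairs `(g_0, g_1), (g_1, g_2), …, (g_m, g_0)`. -/
def circleSet {k : ℕ} (G : Finset (Fin k)) : Multiset (Fin k × Fin k) :=
  ((G.sort (· ≤ ·)).zip ((G.sort (· ≤ ·)).rotate 1) : List (Fin k × Fin k))

/-- If, for every color `i`, the multiset `M` has exactly `c i` bras `⟨i|` and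
`c i` kets `|i⟩`, and `M` is stable (no weight-decreasing ket-exchange step
applies), then `M` is the union of the circle bra-ket sets of the greedy
independent sets `G_1, …, G_q` of `c`, where `q = max_i c(i)`. -/


lemma wt_self {k : ℕ} (a : Fin k) : wt k a a = k := by simp [wt]

lemma wt_val {k : ℕ} {a b : Fin k} (h : a ≠ b) :
    wt k a b = if a.val < b.val then b.val - a.val else b.val + k - a.val := by
  have hk : 0 < k := a.pos
  have hb : (b:ℕ) < k := b.isLt
  have ha : (a:ℕ) < k := a.isLt
  have hne : (a:ℕ) ≠ (b:ℕ) := fun hh => h (Fin.ext hh)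
  rw [wt, if_neg h]
  rcases lt_or_gt_of_ne hne with hlt | hgt
  · have h1 : ((b:ℤ) - (a:ℤ)) % (k:ℤ) = (b:ℤ) - (a:ℤ) :=
      Int.emod_eq_of_lt (by omega) (by omega)
    rw [h1]; split <;> omega
  · have h1 : ((b:ℤ) - (a:ℤ)) % (k:ℤ) = ((b:ℤ) - (a:ℤ) + k * 1) % k := by
      rw [Int.add_mul_emod_self_left]
    have h2 : ((b:ℤ) - (a:ℤ) + k * 1) % k = (b:ℤ) - (a:ℤ) + k * 1 :=
      Int.emod_eq_of_lt (by omega) (by omega)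
    rw [h1, h2]; split <;> omega

lemma wt_le {k : ℕ} (a b : Fin k) : wt k a b ≤ k := by
  by_cases h : a = b
  · simp [h, wt_self]
  · rw [wt_val h]; have := a.isLt; have := b.isLt; split <;> omega

lemma wt_pos {k : ℕ} (a b : Fin k) : 1 ≤ wt k a b := by
  by_cases h : a = b
  · simp [h, wt_self]; exact a.pos
  · rw [wt_val h]
    have := a.isLt; have := b.isLt
    have : (a:ℕ) ≠ (b:ℕ) := fun hh => h (Fin.ext hh)
    split <;> omega

lemma wt_lt_of_ne {k : ℕ} {a b : Fin k} (h : a ≠ b) : wt k a b < k := by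
  rw [wt_val h]
  have := a.isLt; have := b.isLt
  have : (a:ℕ) ≠ (b:ℕ) := fun hh => h (Fin.ext hh)
  split <;> omega

lemma wt_inj {k : ℕ} {a b b' : Fin k} (h : wt k a b = wt k a b') : b = b' := by
  by_cases h1 : a = b <;> by_cases h2 : a = b'
  · rw [← h1, ← h2]
  · exfalso; rw [← h1, wt_self] at h; exact absurd h.symm (Nat.ne_of_lt (wt_lt_of_ne h2))
  · exfalso; rw [← h2, wt_self] at h; exact absurd h (Nat.ne_of_lt (wt_lt_of_ne h1))
  · rw [wt_val h1, wt_val h2] at h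
    have := a.isLt; have := b.isLt; have := b'.isLt
    have e1 : (a:ℕ) ≠ (b:ℕ) := fun hh => h1 (Fin.ext hh)
    have e2 : (a:ℕ) ≠ (b':ℕ) := fun hh => h2 (Fin.ext hh)
    apply Fin.ext
    split at h <;> split at h <;> omega

lemma key_arith {k : ℕ} {i u x : Fin k} (hxi : x ≠ i) (hui : u ≠ i) (hux : u ≠ x)
    (h : wt k u x ≤ wt k i x) : wt k i u < wt k i x := by
  rw [wt_val (Ne.symm hui), wt_val (Ne.symm hxi)]
  rw [wt_val hux, wt_val (Ne.symm hxi)] at h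
  have := i.isLt; have := u.isLt; have := x.isLt
  have e1 : (x:ℕ) ≠ (i:ℕ) := fun hh => hxi (Fin.ext hh)
  have e2 : (u:ℕ) ≠ (i:ℕ) := fun hh => hui (Fin.ext hh)
  have e3 : (u:ℕ) ≠ (x:ℕ) := fun hh => hux (Fin.ext hh)
  split at h <;> split at h <;> split <;> omega

noncomputable def nxt {k : ℕ} (G : Finset (Fin k)) (a : Fin k) : Fin k :=
  if h : ∃ b ∈ G, ∀ y ∈ G, wt k a b ≤ wt k a y then h.choose else a

lemma nxt_spec {k : ℕ} {G : Finset (Fin k)} (hne : G.Nonempty) (a : Fin k) :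
    nxt G a ∈ G ∧ ∀ y ∈ G, wt k a (nxt G a) ≤ wt k a y := by
  have h : ∃ b ∈ G, ∀ y ∈ G, wt k a b ≤ wt k a y :=
    G.exists_min_image (wt k a) hne
  rw [nxt, dif_pos h]
  exact ⟨h.choose_spec.1, h.choose_spec.2⟩

lemma nxt_eq {k : ℕ} {G : Finset (Fin k)} {a b : Fin k} (hb : b ∈ G)
    (hmin : ∀ y ∈ G, wt k a b ≤ wt k a y) : nxt G a = b := by
  have hne : G.Nonempty := ⟨b, hb⟩
  obtain ⟨h1, h2⟩ := nxt_spec hne a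
  exact wt_inj (le_antisymm (h2 b hb) (hmin _ h1))


lemma circleSet_eq {k : ℕ} (G : Finset (Fin k)) :
    circleSet G = G.val.map (fun a => (a, nxt G a)) := by
  classical
  set l := G.sort (· ≤ ·) with hl
  have hGval : (l : Multiset (Fin k)) = G.val := G.sort_eq _
  have hmem : ∀ y, y ∈ l ↔ y ∈ G := fun y => Finset.mem_sort _
  have hsort : l.Pairwise (· < ·) := G.sortedLT_sort.pairwise
  have hmono : ∀ {s t : ℕ} (hs : s < l.length) (ht : t < l.length),
      s < t → l[s] < l[t] := by
    intro s t hs ht hst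
    exact List.pairwise_iff_get.mp hsort ⟨s, hs⟩ ⟨t, ht⟩ hst
  have key : ∀ (t : ℕ) (ht : t < l.length) (ht1 : (t+1) % l.length < l.length),
      nxt G l[t] = l[(t+1) % l.length] := by
    intro t ht ht1
    apply nxt_eq ((hmem _).mp (List.getElem_mem _))
    intro y hy
    obtain ⟨s, hs, rfl⟩ := List.getElem_of_mem ((hmem _).mpr hy)
    set a := l[t] with ha
    by_cases hst : s = t
    · subst hst
      exact (wt_le _ _).trans_eq (wt_self _).symm
    have hne : l[s] ≠ a := by
      rcases Nat.lt_or_ge s t with h' | h'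
      · exact ne_of_lt (hmono hs ht h')
      · exact ne_of_gt (hmono ht hs (lt_of_le_of_ne h' (Ne.symm hst)))
    have hvne : l[s].val ≠ a.val := fun hh => hne (Fin.ext hh)
    rcases Nat.lt_or_ge (t+1) l.length with hn | hn
    · have hb : l[(t+1) % l.length] = l[t+1]'hn := by
        congr 1; exact Nat.mod_eq_of_lt hn
      rw [hb]
      have hab : a.val < (l[t+1]'hn).val := hmono ht hn (Nat.lt_succ_self t)
      have hbne : a ≠ l[t+1]'hn := Fin.ne_of_val_ne (Nat.ne_of_lt hab)
      rw [wt_val hbne, wt_val (Ne.symm hne)]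
      have h1 := (l[t+1]'hn).isLt
      have h2 := l[s].isLt
      have h3 := a.isLt
      rcases Nat.lt_or_ge s t with h' | h'
      · have : l[s].val < a.val := hmono hs ht h'
        split <;> split <;> omega
      · have h'' : t + 1 ≤ s := lt_of_le_of_ne h' (Ne.symm hst)
        have : (l[t+1]'hn).val ≤ l[s].val := by
          rcases Nat.eq_or_lt_of_le h'' with h3 | h3
          · subst h3; exact le_rfl
          · exact le_of_lt (hmono hn hs h3)
        split <;> split <;> omega
    · have hn' : t + 1 = l.length := by omega
      have h0 : 0 < l.length := by omega
      have hb : l[(t+1) % l.length] = l[0]'h0 := by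
        congr 1; rw [hn', Nat.mod_self]
      rw [hb]
      have hst' : s < t := by omega
      have htpos : 0 < t := by omega
      have hb_lt : (l[0]'h0).val < a.val := hmono h0 ht htpos
      have hs_lt : l[s].val < a.val := hmono hs ht hst'
      have hb_le : (l[0]'h0).val ≤ l[s].val := by
        rcases Nat.eq_zero_or_pos s with h3 | h3
        · subst h3; exact le_rfl
        · exact le_of_lt (hmono h0 hs h3)
      have hbne : a ≠ l[0]'h0 := Fin.ne_of_val_ne (Ne.symm (Nat.ne_of_lt hb_lt))
      rw [wt_val hbne, wt_val (Ne.symm hne)]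
      have h1 := (l[0]'h0).isLt
      have h2 := l[s].isLt
      have h3 := a.isLt
      split <;> split <;> omega
  have hlist : l.zip (l.rotate 1) = l.map (fun a => (a, nxt G a)) := by
    apply List.ext_getElem
    · simp
    · intro i h1 h2
      have hi : i < l.length := by simpa using h2
      have hrot : i < (l.rotate 1).length := by simpa using hi
      rw [List.getElem_zip, List.getElem_map, List.getElem_rotate]
      have hmn : (i + 1) % l.length < l.length := Nat.mod_lt _ (by omega)
      rw [key i hi hmn]
  show ((l.zip (l.rotate 1) : List (Fin k × Fin k)) : Multiset (Fin k × Fin k)) = _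
  rw [hlist, ← Multiset.map_coe, hGval]



lemma pairstab {k : ℕ} {M : Multiset (Fin k × Fin k)}
    (hstable : ∀ M' : Multiset (Fin k × Fin k), ¬ DecStep k M M')
    {p q : Fin k × Fin k} (hp : p ∈ M) (hq : q ∈ M.erase p) :
    min (wt k p.1 p.2) (wt k q.1 q.2) ≤ min (wt k p.1 q.2) (wt k q.1 p.2) := by
  by_contra hlt
  push_neg at hlt
  refine hstable ((p.1, q.2) ::ₘ (q.1, p.2) ::ₘ (M.erase p).erase q)
    ⟨p.1, p.2, q.1, q.2, (M.erase p).erase q, ?_, rfl, hlt⟩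
  rw [Prod.mk.eta, Prod.mk.eta, Multiset.cons_erase hq, Multiset.cons_erase hp]

lemma mem_bra_pos {k : ℕ} {c : Fin k → ℕ} {M : Multiset (Fin k × Fin k)}
    (hbra : ∀ i : Fin k, (M.filter (fun p => p.1 = i)).card = c i)
    {p : Fin k × Fin k} (hp : p ∈ M) : 1 ≤ c p.1 := by
  rw [← hbra p.1]
  exact Multiset.card_pos_iff_exists_mem.mpr ⟨p, Multiset.mem_filter.mpr ⟨hp, rfl⟩⟩

lemma mem_ket_pos {k : ℕ} {c : Fin k → ℕ} {M : Multiset (Fin k × Fin k)}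
    (hket : ∀ i : Fin k, (M.filter (fun p => p.2 = i)).card = c i)
    {p : Fin k × Fin k} (hp : p ∈ M) : 1 ≤ c p.2 := by
  rw [← hket p.2]
  exact Multiset.card_pos_iff_exists_mem.mpr ⟨p, Multiset.mem_filter.mpr ⟨hp, rfl⟩⟩

lemma mem_greedySet {k : ℕ} {c : Fin k → ℕ} {p : ℕ} {x : Fin k} :
    x ∈ greedySet c p ↔ p ≤ c x := by simp [greedySet]

lemma step1 {k : ℕ} {c : Fin k → ℕ} {M : Multiset (Fin k × Fin k)}
    (hbra : ∀ i : Fin k, (M.filter (fun p => p.1 = i)).card = c i)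
    (hket : ∀ i : Fin k, (M.filter (fun p => p.2 = i)).card = c i)
    (hstable : ∀ M' : Multiset (Fin k × Fin k), ¬ DecStep k M M')
    {i : Fin k} (hi : 1 ≤ c i) :
    (i, nxt (greedySet c 1) i) ∈ M := by
  classical
  set supp := greedySet c 1 with hsupp
  -- the multiset of arcs with bra i is nonempty
  have hfne : (M.filter (fun p => p.1 = i)).toFinset.Nonempty := by
    have hcard : 0 < Multiset.card (M.filter (fun p => p.1 = i)) := by rw [hbra i]; omega
    obtain ⟨p, hp⟩ := Multiset.card_pos_iff_exists_mem.mp hcard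
    exact ⟨p, Multiset.mem_toFinset.mpr hp⟩
  obtain ⟨b, hbT, hbmin⟩ :=
    (M.filter (fun p => p.1 = i)).toFinset.exists_min_image (fun p => wt k i p.2) hfne
  rw [Multiset.mem_toFinset, Multiset.mem_filter] at hbT
  obtain ⟨hbM, hb1⟩ := hbT
  have hminB : ∀ p ∈ M, p.1 = i → wt k i b.2 ≤ wt k i p.2 := by
    intro p hp hp1
    exact hbmin p (by rw [Multiset.mem_toFinset, Multiset.mem_filter]; exact ⟨hp, hp1⟩)
  have hnobad : ∀ x ∈ supp, wt k i b.2 ≤ wt k i x := by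
    by_contra hbad
    push_neg at hbad
    have hBne : (supp.filter (fun x => wt k i x < wt k i b.2)).Nonempty := by
      obtain ⟨x, hx1, hx2⟩ := hbad
      exact ⟨x, Finset.mem_filter.mpr ⟨hx1, hx2⟩⟩
    obtain ⟨x, hxB, hxmin⟩ :=
      (supp.filter (fun x => wt k i x < wt k i b.2)).exists_min_image (fun x => wt k i x) hBne
    rw [Finset.mem_filter] at hxB
    obtain ⟨hxsupp, hxlt⟩ := hxB
    have hxne_i : x ≠ i := by
      intro h
      rw [h, wt_self] at hxlt
      have := wt_le i b.2
      omega
    -- an arc with ket x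
    have hcx : 1 ≤ c x := mem_greedySet.mp hxsupp
    have hfne2 : ∃ f, f ∈ M.filter (fun p => p.2 = x) := by
      apply Multiset.card_pos_iff_exists_mem.mp
      rw [hket x]; omega
    obtain ⟨f, hfF⟩ := hfne2
    rw [Multiset.mem_filter] at hfF
    obtain ⟨hfM, hf2⟩ := hfF
    have hfneb : f ≠ b := by
      intro h
      rw [h] at hf2
      rw [hf2] at hxlt
      omega
    by_cases hu : f.1 = i
    · have := hminB f hfM hu
      rw [hf2] at this
      omega
    · have hstab := pairstab hstable hbM ((Multiset.mem_erase_of_ne hfneb).mpr hfM)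
      rw [hb1, hf2] at hstab
      have hux_le : wt k f.1 x ≤ wt k i x := by omega
      by_cases hux : f.1 = x
      · rw [hux, wt_self] at hux_le
        have := wt_lt_of_ne (Ne.symm hxne_i)
        omega
      · have hkey := key_arith hxne_i (fun h => hu h) hux hux_le
        have hcu : 1 ≤ c f.1 := mem_bra_pos hbra hfM
        have husupp : f.1 ∈ supp := mem_greedySet.mpr hcu
        have huB : f.1 ∈ supp.filter (fun y => wt k i y < wt k i b.2) :=
          Finset.mem_filter.mpr ⟨husupp, by omega⟩
        have := hxmin f.1 huB
        omega
  have hb2supp : b.2 ∈ supp := mem_greedySet.mpr (mem_ket_pos hket hbM)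
  have : nxt supp i = b.2 := nxt_eq hb2supp hnobad
  rw [this, ← hb1, Prod.mk.eta]
  exact hbM

lemma circleSet_map_fst {k : ℕ} (G : Finset (Fin k)) :
    (circleSet G).map Prod.fst = G.val := by
  rw [circleSet_eq, Multiset.map_map]
  exact Multiset.map_id' _

lemma circleSet_map_snd {k : ℕ} (G : Finset (Fin k)) :
    (circleSet G).map Prod.snd = G.val := by
  show ((G.sort (· ≤ ·)).zip ((G.sort (· ≤ ·)).rotate 1) : Multiset (Fin k × Fin k)).map
    Prod.snd = G.val
  rw [Multiset.map_coe, List.map_snd_zip (by simp)]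
  rw [Multiset.coe_eq_coe.mpr (List.rotate_perm _ 1)]
  exact G.sort_eq _

lemma card_filter_fst {k : ℕ} (F : Multiset (Fin k × Fin k)) (i : Fin k) :
    (F.filter (fun p => p.1 = i)).card = (F.map Prod.fst).count i := by
  rw [Multiset.count_map]
  congr 1
  apply Multiset.filter_congr
  intro p _
  exact ⟨fun h => h.symm, fun h => h.symm⟩

lemma card_filter_snd {k : ℕ} (F : Multiset (Fin k × Fin k)) (i : Fin k) :
    (F.filter (fun p => p.2 = i)).card = (F.map Prod.snd).count i := by
  rw [Multiset.count_map]
  congr 1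
  apply Multiset.filter_congr
  intro p _
  exact ⟨fun h => h.symm, fun h => h.symm⟩

lemma count_finset_val {k : ℕ} (G : Finset (Fin k)) (i : Fin k) :
    (G.val).count i = if i ∈ G then 1 else 0 := by
  split
  · exact Multiset.count_eq_one_of_mem G.nodup (by assumption)
  · exact Multiset.count_eq_zero_of_notMem (by assumption)

lemma nodup_le {α : Type*} [DecidableEq α] {d M : Multiset α} (hd : d.Nodup)
    (h : ∀ a ∈ d, a ∈ M) : d ≤ M := by
  rw [Multiset.le_iff_count]
  intro a
  by_cases ha : a ∈ d
  · rw [Multiset.count_eq_one_of_mem hd ha]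
    exact Multiset.one_le_count_iff_mem.mpr (h a ha)
  · simp [Multiset.count_eq_zero_of_notMem ha]

lemma circleSet_nodup {k : ℕ} (G : Finset (Fin k)) : (circleSet G).Nodup := by
  have h := circleSet_map_fst G
  have : ((circleSet G).map Prod.fst).Nodup := h ▸ G.nodup
  exact Multiset.Nodup.of_map _ this

theorem aux : ∀ (n : ℕ) {k : ℕ} (c : Fin k → ℕ) (M : Multiset (Fin k × Fin k)),
    (∑ i, c i = n) →
    (∀ i : Fin k, (M.filter (fun p => p.1 = i)).card = c i) →
    (∀ i : Fin k, (M.filter (fun p => p.2 = i)).card = c i) →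
    (∀ M' : Multiset (Fin k × Fin k), ¬ DecStep k M M') →
    M = ∑ p ∈ Finset.Icc 1 (Finset.univ.sup c), circleSet (greedySet c p) := by
  intro n
  induction n using Nat.strong_induction_on with
  | _ n IH =>
    intro k c M hsum hbra hket hstable
    by_cases hn0 : ∑ i, c i = 0
    · -- base case : c = 0, M = 0
      have hc0 : ∀ i, c i = 0 := by
        intro i
        exact (Finset.sum_eq_zero_iff.mp hn0) i (Finset.mem_univ i)
      have hM0 : M = 0 := by
        apply Multiset.eq_zero_of_forall_notMem
        intro p hp
        have := mem_bra_pos hbra hp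
        rw [hc0 p.1] at this
        omega
      have hq0 : Finset.univ.sup c = 0 := by
        apply Nat.le_zero.mp
        exact Finset.sup_le fun i _ => le_of_eq (hc0 i)
      rw [hM0, hq0]
      rw [Finset.Icc_eq_empty (by omega), Finset.sum_empty]
    · -- inductive step
      obtain ⟨i0, _, hi0⟩ := Finset.exists_ne_zero_of_sum_ne_zero hn0
      have hi0' : 1 ≤ c i0 := by omega
      set supp := greedySet c 1 with hsupp
      have hsne : supp.Nonempty := ⟨i0, mem_greedySet.mpr hi0'⟩
      set F := circleSet supp with hF
      have hFM : F ≤ M := by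
        apply nodup_le (circleSet_nodup supp)
        intro a ha
        rw [circleSet_eq] at ha
        obtain ⟨x, hx, rfl⟩ := Multiset.mem_map.mp ha
        exact step1 hbra hket hstable (mem_greedySet.mp hx)
      set M' := M - F with hM'
      have hMsplit : M' + F = M := tsub_add_cancel_of_le hFM
      set c' := fun i => c i - 1 with hc'
      -- counts for M'
      have hbra' : ∀ i : Fin k, (M'.filter (fun p => p.1 = i)).card = c' i := by
        intro i
        rw [hM', Multiset.filter_sub, Multiset.card_sub (Multiset.filter_le_filter _ hFM),
          hbra i, card_filter_fst, hF, circleSet_map_fst, count_finset_val]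
        by_cases h : i ∈ supp
        · rw [if_pos h]
        · rw [if_neg h]
          have : ¬ 1 ≤ c i := fun hh => h (mem_greedySet.mpr hh)
          show c i - 0 = c i - 1
          omega
      have hket' : ∀ i : Fin k, (M'.filter (fun p => p.2 = i)).card = c' i := by
        intro i
        rw [hM', Multiset.filter_sub, Multiset.card_sub (Multiset.filter_le_filter _ hFM),
          hket i, card_filter_snd, hF, circleSet_map_snd, count_finset_val]
        by_cases h : i ∈ supp
        · rw [if_pos h]
        · rw [if_neg h]
          have : ¬ 1 ≤ c i := fun hh => h (mem_greedySet.mpr hh)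
          show c i - 0 = c i - 1
          omega
      -- stability of M'
      have hstable' : ∀ M'' : Multiset (Fin k × Fin k), ¬ DecStep k M' M'' := by
        rintro M'' ⟨i, j, i', j', D, hC, _, hlt⟩
        exact hstable ((i, j') ::ₘ (i', j) ::ₘ (D + F))
          ⟨i, j, i', j', D + F, by rw [← hMsplit, hC, Multiset.cons_add, Multiset.cons_add],
            rfl, hlt⟩
      -- apply IH
      have hlt_sum : ∑ i, c' i < n := by
        rw [← hsum]
        apply Finset.sum_lt_sum (fun i _ => Nat.sub_le _ _)
        exact ⟨i0, Finset.mem_univ i0, by omega⟩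
      have hIH := IH (∑ i, c' i) hlt_sum c' M' rfl hbra' hket' hstable'
      -- assemble
      set q := Finset.univ.sup c with hq
      have hq1 : 1 ≤ q := le_trans hi0' (Finset.le_sup (Finset.mem_univ i0))
      have hq' : Finset.univ.sup c' = q - 1 := by
        apply le_antisymm
        · exact Finset.sup_le fun i _ => by
            have : c i ≤ q := Finset.le_sup (Finset.mem_univ i)
            show c i - 1 ≤ q - 1
            omega
        · haveI : Nonempty (Fin k) := ⟨i0⟩
          obtain ⟨i1, _, hi1⟩ := Finset.exists_mem_eq_sup Finset.univ
            Finset.univ_nonempty c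
          calc q - 1 = c' i1 := by show q - 1 = c i1 - 1; omega
          _ ≤ _ := Finset.le_sup (Finset.mem_univ i1)
      have hgreedy : ∀ p, 1 ≤ p → greedySet c' p = greedySet c (p + 1) := by
        intro p hp
        ext x
        simp only [mem_greedySet, hc']
        omega
      have hIcc : Finset.Icc 1 q = insert 1 (Finset.Icc 2 q) := by
        ext x
        simp only [Finset.mem_Icc, Finset.mem_insert]
        omega
      rw [hIcc, Finset.sum_insert (by simp [Finset.mem_Icc])]
      have hIcc2 : Finset.Icc 2 q = (Finset.Icc 1 (q - 1)).map (addRightEmbedding 1) := by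
        rw [Finset.map_add_right_Icc]
        congr 1
        omega
      rw [hIcc2, Finset.sum_map]
      have : ∀ p ∈ Finset.Icc 1 (q - 1),
          circleSet (greedySet c (addRightEmbedding 1 p)) = circleSet (greedySet c' p) := by
        intro p hp
        rw [Finset.mem_Icc] at hp
        rw [hgreedy p hp.1]
        rfl
      rw [Finset.sum_congr rfl this, ← hq' , ← hIH, ← hMsplit]
      rw [add_comm]

theorem stable_eq_union_circleSets {k : ℕ} (c : Fin k → ℕ) (hn : 1 ≤ ∑ i, c i)
    (M : Multiset (Fin k × Fin k))
    (hbra : ∀ i : Fin k, (M.filter (fun p => p.1 = i)).card = c i)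
    (hket : ∀ i : Fin k, (M.filter (fun p => p.2 = i)).card = c i)
    (hstable : ∀ M' : Multiset (Fin k × Fin k), ¬ DecStep k M M') :
    M = ∑ p ∈ Finset.Icc 1 (Finset.univ.sup c), circleSet (greedySet c p) := by
  exact aux (∑ i, c i) c M rfl hbra hket hstable
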